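/- Let P be a graded poset and G a copresheaf of abelian groups on P, and suppose (P,G) admits a cellular form Λ. Then: (1) for every x ∈ P with r(x) > 0, the homomorphism ⊕_{y<x, r(y)=0} G(y) → G(x) formed by the extension maps of G is surjective; (2) for every x of rank 1, the differential ∂ maps Λ_x isomorphically onto ker(⊕_{y<x} G(y) → G(x)); (3) if every G(y) is free abelian, then every Λ_x is free abelian. -/

import Mathlib

open CategoryTheory Classical

/-- A rank function making `P` a graded poset: minimal elements have rank `0`, the rank
increases by `1` along covering relations, and is strictly monotone. -/
def IsGrading (P : Type) [PartialOrder P] (r : P → ℕ) : Prop :=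
  (∀ x : P, IsMin x → r x = 0) ∧ (∀ x y : P, x ⋖ y → r y = r x + 1) ∧
    ∀ x y : P, x < y → r x < r y

/-- A cellular form of a pair `(P, G)` where `P` is a poset graded by `r` and `G` is a
copresheaf of abelian groups on `P` (a functor `P ⥤ AddCommGrp`).

It consists of a `P`-graded differential `ℤ`-module `Λ = ⊕_{x∈P} Λ_x`, the differential
being recorded by its components `δ x y : Λ_x →+ Λ_y`, together with the maps
`e x y : Λ_y →+ G(x)` (for `y ≤ x` of rank `0`) realising the isomorphism of copresheaves
`(x ↦ H₀(Λ_{≤x})) ≅ G`, such that: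

* `∂` maps `Λ_x` into `⊕_{y⋖x} Λ_y` (fields `delta_support`, `delta_fin`) and `∂∂ = 0`
  (field `delta_delta`); hence each `Λ_{≤x} = ⊕_{y≤x} Λ_y` is a chain complex graded by
  rank;
* `Λ_{≤x}` has trivial homology in all positive degrees (field `exact_pos`: every cycle
  of positive degree supported below `x` is a boundary of a chain supported below `x`);
* the copresheaf `x ↦ H₀(Λ_{≤x})` (whose extension maps are induced by the inclusions
  `Λ_{≤x} ↪ Λ_{≤x'}`) is isomorphic to `G` via the maps induced by `e` (fields
  `e_natural`, `e_surj`, `e_ker`: `e` is compatible with the extension maps of `G`, and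
  the induced map `H₀(Λ_{≤x}) → G(x)` is surjective and injective — an element of degree
  `0` maps to `0` iff it is a boundary). -/
structure CellularForm (P : Type) [PartialOrder P] (r : P → ℕ)
    (G : P ⥤ AddCommGrpCat.{0}) where
  Λ : P → Type
  [grp : ∀ x, AddCommGroup (Λ x)]
  δ : ∀ x y : P, Λ x →+ Λ y
  e : ∀ x y : P, y ≤ x → r y = 0 → (Λ y →+ G.obj x)
  delta_support : ∀ x y : P, ¬(y ⋖ x) → δ x y = 0
  delta_fin : ∀ (x : P) (a : Λ x), {y : P | δ x y a ≠ 0}.Finite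
  delta_delta : ∀ (x z : P) (a : Λ x), (∑ᶠ y : P, δ y z (δ x y a)) = 0
  exact_pos : ∀ (x : P) (q : ℕ) (a : ∀ y : P, Λ y),
    {y : P | a y ≠ 0}.Finite →
    (∀ y, a y ≠ 0 → y ≤ x ∧ r y = q + 1) →
    (∀ z, (∑ᶠ y : P, δ y z (a y)) = 0) →
    ∃ b : ∀ y : P, Λ y, {y : P | b y ≠ 0}.Finite ∧
      (∀ y, b y ≠ 0 → y ≤ x ∧ r y = q + 2) ∧ ∀ y, a y = ∑ᶠ w : P, δ w y (b w)
  e_natural : ∀ (x x' y : P) (h : y ≤ x) (h' : x ≤ x') (h0 : r y = 0) (a : Λ y),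
    G.map (homOfLE h') (e x y h h0 a) = e x' y (h.trans h') h0 a
  e_surj : ∀ (x : P) (g : G.obj x), ∃ a : ∀ y : P, Λ y,
    {y : P | a y ≠ 0}.Finite ∧ (∀ y, a y ≠ 0 → y ≤ x ∧ r y = 0) ∧
    (∑ᶠ y : P, if h : y ≤ x ∧ r y = 0 then e x y h.1 h.2 (a y) else 0) = g
  e_ker : ∀ (x : P) (a : ∀ y : P, Λ y), {y : P | a y ≠ 0}.Finite →
    (∀ y, a y ≠ 0 → y ≤ x ∧ r y = 0) →
    ((∑ᶠ y : P, if h : y ≤ x ∧ r y = 0 then e x y h.1 h.2 (a y) else 0) = 0 ↔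
      ∃ b : ∀ y : P, Λ y, {y : P | b y ≠ 0}.Finite ∧
        (∀ y, b y ≠ 0 → y ≤ x ∧ r y = 1) ∧ ∀ y, a y = ∑ᶠ w : P, δ w y (b w))

attribute [instance] CellularForm.grp

/-- The property, for a given `P`-graded differential `ℤ`-module `(Λ, δ)`, of being a
cellular form of `(P, G)`; see `CellularForm` for a description of the fields, the only
difference being that here the realising maps `e` are merely required to exist. -/
structure IsCellularForm (P : Type) [PartialOrder P] (r : P → ℕ)
    (G : P ⥤ AddCommGrpCat.{0}) (Λ : P → Type) [inst : ∀ x, AddCommGroup (Λ x)]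
    (δ : ∀ x y : P, Λ x →+ Λ y) : Prop where
  delta_support : ∀ x y : P, ¬(y ⋖ x) → δ x y = 0
  delta_fin : ∀ (x : P) (a : Λ x), {y : P | δ x y a ≠ 0}.Finite
  delta_delta : ∀ (x z : P) (a : Λ x), (∑ᶠ y : P, δ y z (δ x y a)) = 0
  exact_pos : ∀ (x : P) (q : ℕ) (a : ∀ y : P, Λ y),
    {y : P | a y ≠ 0}.Finite →
    (∀ y, a y ≠ 0 → y ≤ x ∧ r y = q + 1) →
    (∀ z, (∑ᶠ y : P, δ y z (a y)) = 0) →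
    ∃ b : ∀ y : P, Λ y, {y : P | b y ≠ 0}.Finite ∧
      (∀ y, b y ≠ 0 → y ≤ x ∧ r y = q + 2) ∧ ∀ y, a y = ∑ᶠ w : P, δ w y (b w)
  hom_zero : ∃ e : ∀ x y : P, y ≤ x → r y = 0 → (Λ y →+ G.obj x),
    (∀ (x x' y : P) (h : y ≤ x) (h' : x ≤ x') (h0 : r y = 0) (a : Λ y),
      G.map (homOfLE h') (e x y h h0 a) = e x' y (h.trans h') h0 a) ∧
    (∀ (x : P) (g : G.obj x), ∃ a : ∀ y : P, Λ y,
      {y : P | a y ≠ 0}.Finite ∧ (∀ y, a y ≠ 0 → y ≤ x ∧ r y = 0) ∧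
      (∑ᶠ y : P, if h : y ≤ x ∧ r y = 0 then e x y h.1 h.2 (a y) else 0) = g) ∧
    (∀ (x : P) (a : ∀ y : P, Λ y), {y : P | a y ≠ 0}.Finite →
      (∀ y, a y ≠ 0 → y ≤ x ∧ r y = 0) →
      ((∑ᶠ y : P, if h : y ≤ x ∧ r y = 0 then e x y h.1 h.2 (a y) else 0) = 0 ↔
        ∃ b : ∀ y : P, Λ y, {y : P | b y ≠ 0}.Finite ∧
          (∀ y, b y ≠ 0 → y ≤ x ∧ r y = 1) ∧ ∀ y, a y = ∑ᶠ w : P, δ w y (b w)))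

set_option maxHeartbeats 1000000


lemma free_int_transfer {M : Type} [AddCommGroup M] (i1 i2 : Module ℤ M)
    (h : @Module.Free ℤ M _ _ i1) : @Module.Free ℤ M _ _ i2 := by
  haveI : Subsingleton (Module ℤ M) := ⟨fun a b =>
    (AddCommGroup.uniqueIntModule.uniq a).trans (AddCommGroup.uniqueIntModule.uniq b).symm⟩
  cases Subsingleton.elim i1 i2
  exact h

open Classical in
theorem int_finsupp_submodule_free {I : Type} (N : Submodule ℤ (I →₀ ℤ)) :
    Module.Free ℤ N := by
  classical
  letI : LinearOrder I := IsWellOrder.linearOrder (WellOrderingRel (α := I))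
  haveI : WellFoundedLT I := ⟨(inferInstance : IsWellOrder I (WellOrderingRel)).wf⟩
  -- the submodule of elements supported on indices ≤ i
  let K : I → Submodule ℤ (I →₀ ℤ) := fun i =>
    ⨅ j ∈ {j : I | i < j}, LinearMap.ker (Finsupp.lapply (R := ℤ) j)
  have memK : ∀ (i : I) (f : I →₀ ℤ), f ∈ K i ↔ ∀ j, i < j → f j = 0 := by
    intro i f
    simp [K, Submodule.mem_iInf, Finsupp.lapply]
  -- the ideal of leading coefficients at i
  let k : I → Submodule ℤ ℤ := fun i => (N ⊓ K i).map (Finsupp.lapply (R := ℤ) i)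
  let g : I → ℤ := fun i => Submodule.IsPrincipal.generator (k i)
  have hx : ∀ i : I, ∃ f : I →₀ ℤ, f ∈ N ⊓ K i ∧ f i = g i := by
    intro i
    obtain ⟨f, hf, hfi⟩ := Submodule.mem_map.mp (Submodule.IsPrincipal.generator_mem (k i))
    exact ⟨f, hf, hfi⟩
  choose x hxmem hxi using hx
  have hxN : ∀ i, x i ∈ N := fun i => (hxmem i).1
  have hxhi : ∀ i j, i < j → x i j = 0 := fun i j hij => (memK i (x i)).mp (hxmem i).2 j hij
  -- nonzero generators index the basis
  set S := {i : I // g i ≠ 0} with hS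
  let v : S → N := fun i => ⟨x i.1, hxN i.1⟩
  -- linear independence
  have hli : LinearIndependent ℤ v := by
    rw [linearIndependent_iff']
    intro s c
    induction s using Finset.strongInduction with
    | _ s IH =>
      intro hssub i hi
      rcases Finset.eq_empty_or_nonempty s with h | hne
      · simp [h] at hi
      · set i0 : S := s.max' hne with hi0
        have hc0 : c i0 = 0 := by
          have hcoord : ((∑ j ∈ s, c j • v j : N) : I →₀ ℤ) i0.1 = 0 := by
            rw [hssub]; rfl
          have hthis : (∑ j ∈ s, c j • x j.1) i0.1 = 0 := by
            simpa using hcoord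
          rw [Finsupp.finset_sum_apply] at hthis
          have heval : ∀ j ∈ s, (c j • x j.1) i0.1 = if j = i0 then c j * g j.1 else 0 := by
            intro j hj
            by_cases hji : j = i0
            · subst hji; simp [hxi]
            · have hjlt : j.1 < i0.1 := by
                have hle : j ≤ i0 := Finset.le_max' s j hj
                exact lt_of_le_of_ne (Subtype.coe_le_coe.mpr hle) (Subtype.coe_ne_coe.mpr hji)
              simp [Finsupp.smul_apply, hxhi _ _ hjlt, hji]
          have hsum' : ∑ j ∈ s, (if j = i0 then c j * g j.1 else 0) = 0 := by
            rw [← Finset.sum_congr rfl heval]; exact hthis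
          rw [Finset.sum_ite_eq' s i0 (fun j => c j * g j.1), if_pos (s.max'_mem hne)] at hsum'
          rcases mul_eq_zero.mp hsum' with h | h
          · exact h
          · exact absurd h i0.2
        have hrest : ∑ j ∈ s.erase i0, c j • v j = 0 := by
          calc ∑ j ∈ s.erase i0, c j • v j
              = c i0 • v i0 + ∑ j ∈ s.erase i0, c j • v j := by
                rw [hc0, zero_smul, zero_add]
            _ = ∑ j ∈ s, c j • v j := Finset.add_sum_erase s _ (s.max'_mem hne)
            _ = 0 := hssub
        by_cases hii : i = i0
        · rw [hii]; exact hc0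
        · exact IH (s.erase i0) (Finset.erase_ssubset (s.max'_mem hne)) hrest i
            (Finset.mem_erase.mpr ⟨hii, hi⟩)
  -- spanning
  have hspan : ∀ f : I →₀ ℤ, f ∈ N →
      f ∈ Submodule.span ℤ (Set.range fun i : S => x i.1) := by
    have key : ∀ i : I, ∀ f : I →₀ ℤ, f ∈ N → (∀ j, ¬ j ≤ i → f j = 0) →
        f ∈ Submodule.span ℤ (Set.range fun i : S => x i.1) := by
      intro i
      induction i using WellFoundedLT.induction with
      | _ i IH =>
        intro f hfN hfsupp
        by_cases hf0 : f = 0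
        · simp [hf0]
        · have hne : f.support.Nonempty := Finsupp.support_nonempty_iff.mpr hf0
          set m := f.support.max' hne with hm
          have hfK : f ∈ K m := by
            rw [memK]
            intro j hj
            by_contra hfj
            exact absurd (Finset.le_max' _ j (Finsupp.mem_support_iff.mpr hfj)) (not_le.mpr hj)
          have hfm : f m ∈ k m := Submodule.mem_map.mpr ⟨f, ⟨hfN, hfK⟩, rfl⟩
          obtain ⟨c, hc⟩ := (Submodule.IsPrincipal.mem_iff_eq_smul_generator (k m)).mp hfm
          have hfmne : f m ≠ 0 := Finsupp.mem_support_iff.mp (f.support.max'_mem hne)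
          have hgm : g m ≠ 0 := by
            intro h0
            exact hfmne (by rw [hc]; show c • g m = 0; rw [h0, smul_zero])
          set f' := f - c • x m with hf'
          have hf'N : f' ∈ N := N.sub_mem hfN (N.smul_mem c (hxN m))
          have hf'supp : ∀ j, ¬ j < m → f' j = 0 := by
            intro j hj
            rcases lt_trichotomy j m with h | h | h
            · exact absurd h hj
            · have hval : f' m = 0 := by
                show f m - (c • x m) m = 0
                rw [Finsupp.smul_apply, hxi, hc]
                simp [g]
              rw [h]; exact hval
            · show f j - c • x m j = 0
              rw [hxhi _ _ h]
              have : f j = 0 := by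
                by_contra hfj
                exact absurd (Finset.le_max' _ j (Finsupp.mem_support_iff.mpr hfj)) (not_le.mpr h)
              rw [this]; simp
          have hxmem' : x m ∈ Submodule.span ℤ (Set.range fun i : S => x i.1) :=
            Submodule.subset_span ⟨⟨m, hgm⟩, rfl⟩
          by_cases hf'0 : f' = 0
          · have : f = c • x m := by
              have := hf'0
              rw [hf', sub_eq_zero] at this
              exact this
            rw [this]
            exact Submodule.smul_mem _ c hxmem'
          · have hne' : f'.support.Nonempty := Finsupp.support_nonempty_iff.mpr hf'0
            set m' := f'.support.max' hne' with hm'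
            have hm'm : m' < m := by
              by_contra h
              exact absurd (hf'supp m' h) (Finsupp.mem_support_iff.mp (f'.support.max'_mem hne'))
            have hmi : m ≤ i := by
              by_contra h
              exact absurd (hfsupp m h) hfmne
            have hm'i : m' < i := lt_of_lt_of_le hm'm hmi
            have hf'span := IH m' hm'i f' hf'N (fun j hj => by
              by_contra hfj
              exact hj (Finset.le_max' _ j (Finsupp.mem_support_iff.mpr hfj)))
            have : f = f' + c • x m := by rw [hf']; abel
            rw [this]
            exact Submodule.add_mem _ hf'span (Submodule.smul_mem _ c hxmem')
    intro f hfN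
    by_cases hf0 : f = 0
    · simp [hf0]
    · have hne : f.support.Nonempty := Finsupp.support_nonempty_iff.mpr hf0
      exact key (f.support.max' hne) f hfN (fun j hj => by
        by_contra hfj
        exact hj (Finset.le_max' _ j (Finsupp.mem_support_iff.mpr hfj)))
  have htop : ⊤ ≤ Submodule.span ℤ (Set.range v) := by
    rintro ⟨f, hfN⟩ -
    have h1 : f ∈ Submodule.span ℤ (Set.range fun i : S => x i.1) := hspan f hfN
    have h2 : (Set.range fun i : S => x i.1) = N.subtype '' Set.range v := by
      ext w
      constructor
      · rintro ⟨i, rfl⟩; exact ⟨v i, ⟨i, rfl⟩, rfl⟩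
      · rintro ⟨n, ⟨i, rfl⟩, rfl⟩; exact ⟨i, rfl⟩
    rw [h2, ← Submodule.map_span] at h1
    obtain ⟨n, hn, hnf⟩ := Submodule.mem_map.mp h1
    have : n = ⟨f, hfN⟩ := Subtype.ext hnf
    rwa [this] at hn
  exact free_int_transfer _ _ (Module.Free.of_basis (Module.Basis.mk hli htop))

theorem int_submodule_free {M : Type} [AddCommGroup M] [Module ℤ M] [Module.Free ℤ M]
    (N : Submodule ℤ M) : Module.Free ℤ N := by
  let b := Module.Free.chooseBasis ℤ M
  letI : Module ℤ N := N.module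
  exact free_int_transfer _ _
    (Module.Free.of_equiv'
      (free_int_transfer _ _ (int_finsupp_submodule_free (N.map b.repr.toLinearMap)))
      ((b.repr : M ≃ₗ[ℤ] _).submoduleMap N).symm)

section MainHelpers

variable {P : Type} [PartialOrder P] {r : P → ℕ} {G : P ⥤ AddCommGrpCat.{0}}

lemma IsGrading.rank_le (hr : IsGrading P r) {y x : P} (h : y ≤ x) : r y ≤ r x := by
  rcases eq_or_lt_of_le h with rfl | h
  · exact le_rfl
  · exact (hr.2.2 _ _ h).le

/-- If all components of `δ` vanish on `a` (for `x` of positive rank), then `a = 0`. -/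
lemma CellularForm.delta_inj (C : CellularForm P r G) (hr : IsGrading P r) {x : P}
    (hx : 0 < r x) {a : C.Λ x} (ha : ∀ y, C.δ x y a = 0) : a = 0 := by
  classical
  obtain ⟨q, hq⟩ : ∃ q, r x = q + 1 := ⟨r x - 1, by omega⟩
  set A : ∀ y, C.Λ y := Function.update (fun y => (0 : C.Λ y)) x a with hA
  have hAx : A x = a := Function.update_self x a _
  have hA0 : ∀ y, y ≠ x → A y = 0 := fun y hy => Function.update_of_ne hy a _
  obtain ⟨b, hbfin, hbsupp, hb⟩ := C.exact_pos x q A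
    ((Set.finite_singleton x).subset (fun y hy => by
      by_contra hyx; exact hy (hA0 y hyx)))
    (fun y hy => by
      have hyx : y = x := by by_contra hyx; exact hy (hA0 y hyx)
      subst hyx; exact ⟨le_rfl, hq⟩)
    (fun z => by
      rw [finsum_eq_single _ x (fun w hw => by rw [hA0 w hw, map_zero]), hAx]
      exact ha z)
  have hb0 : ∀ w, b w = 0 := by
    intro w; by_contra hbw
    obtain ⟨hwx, hrw⟩ := hbsupp w hbw
    have := hr.rank_le hwx
    omega
  have hAx' := hb x
  rw [finsum_eq_single _ x (fun w hw => by rw [hb0 w, map_zero]), hb0 x, map_zero] at hAx'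
  rw [← hAx, hAx']

/-- For `x` of rank zero, the map `e x x` is surjective. -/
lemma CellularForm.e0_surj (C : CellularForm P r G) (hr : IsGrading P r) {x : P}
    (h0 : r x = 0) (g : G.obj x) : ∃ c : C.Λ x, C.e x x le_rfl h0 c = g := by
  obtain ⟨a, hfin, hsupp, hsum⟩ := C.e_surj x g
  refine ⟨a x, ?_⟩
  rw [finsum_eq_single _ x (fun y hy => ?_)] at hsum
  · rw [dif_pos ⟨le_rfl, h0⟩] at hsum
    exact hsum
  · by_cases h : y ≤ x ∧ r y = 0
    · rw [dif_pos h]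
      have hay : a y = 0 := by
        by_contra hay
        have hlt := lt_of_le_of_ne h.1 hy
        have := hr.2.2 _ _ hlt; omega
      rw [hay, map_zero]
    · rw [dif_neg h]

/-- For `x` of rank zero, the map `e x x` is injective. -/
lemma CellularForm.e0_inj (C : CellularForm P r G) (hr : IsGrading P r) {x : P}
    (h0 : r x = 0) {c : C.Λ x} (hc : C.e x x le_rfl h0 c = 0) : c = 0 := by
  classical
  set A : ∀ y, C.Λ y := Function.update (fun y => (0 : C.Λ y)) x c with hA
  have hAx : A x = c := Function.update_self x c _
  have hA0 : ∀ y, y ≠ x → A y = 0 := fun y hy => Function.update_of_ne hy c _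
  have hfin : {y : P | A y ≠ 0}.Finite :=
    (Set.finite_singleton x).subset (fun y hy => by by_contra hyx; exact hy (hA0 y hyx))
  have hsupp : ∀ y, A y ≠ 0 → y ≤ x ∧ r y = 0 := by
    intro y hy
    have hyx : y = x := by by_contra hyx; exact hy (hA0 y hyx)
    subst hyx; exact ⟨le_rfl, h0⟩
  obtain ⟨b, hbfin, hbsupp, hb⟩ := (C.e_ker x A hfin hsupp).mp (by
    rw [finsum_eq_single _ x (fun y hy => ?_)]
    · rw [dif_pos ⟨le_rfl, h0⟩, hAx]
      exact hc
    · by_cases h : y ≤ x ∧ r y = 0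
      · rw [dif_pos h, hA0 y hy, map_zero]
      · rw [dif_neg h])
  have hb0 : ∀ w, b w = 0 := by
    intro w; by_contra hbw
    obtain ⟨hwx, hrw⟩ := hbsupp w hbw
    have := hr.rank_le hwx
    omega
  have hAx' := hb x
  rw [finsum_eq_single _ x (fun w hw => by rw [hb0 w, map_zero]), hb0 x, map_zero] at hAx'
  rw [← hAx, hAx']

end MainHelpers

/-- **Statement 9 (properties of cellular forms).**  Let `(P, r)` be a graded poset, `G`
a copresheaf of abelian groups on `P`, and `Λ` a cellular form of `(P, G)`.  Then:
(1) for every `x` with `r(x) > 0`, the map `⊕_{y<x, r(y)=0} G(y) → G(x)` formed by the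
extension maps of `G` is surjective;
(2) for every `x` of rank `1`, the differential `∂` maps `Λ_x` isomorphically onto
`ker(⊕_{y<x} G(y) → G(x))` (the rank-zero pieces `Λ_y` being identified with `G(y)` via
`e`): the family of components `(δ x y)_y` is injective on `Λ_x`, lands in the kernel,
and reaches every family in the kernel;
(3) if every `G(y)` is free abelian then every `Λ_x` is free abelian. -/
theorem statement9 (P : Type) [PartialOrder P] (r : P → ℕ) (hr : IsGrading P r)
    (G : P ⥤ AddCommGrpCat.{0}) (C : CellularForm P r G) :
    (∀ x : P, 0 < r x → ∀ g : G.obj x, ∃ a : ∀ y : P, G.obj y,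
      {y : P | a y ≠ 0}.Finite ∧ (∀ y, a y ≠ 0 → y < x ∧ r y = 0) ∧
      (∑ᶠ y : P, if h : y < x then G.map (homOfLE h.le) (a y) else 0) = g) ∧
    (∀ x : P, r x = 1 →
      (∀ a a' : C.Λ x, (∀ y, C.δ x y a = C.δ x y a') → a = a') ∧
      (∀ a : C.Λ x,
        (∑ᶠ y : P, if h : y < x ∧ r y = 0 then
          G.map (homOfLE h.1.le) (C.e y y le_rfl h.2 (C.δ x y a)) else 0) = 0) ∧
      (∀ g : ∀ y : P, G.obj y, {y : P | g y ≠ 0}.Finite →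
        (∀ y, g y ≠ 0 → y < x) →
        (∑ᶠ y : P, if h : y < x then G.map (homOfLE h.le) (g y) else 0) = 0 →
        ∃ a : C.Λ x, ∀ (y : P) (_ : y < x) (h0 : r y = 0),
          C.e y y le_rfl h0 (C.δ x y a) = g y)) ∧
    ((∀ y : P, Module.Free ℤ (G.obj y)) → ∀ x : P, Module.Free ℤ (C.Λ x)) := by
  classical
  refine ⟨?_, ?_, ?_⟩
  · -- Part (1): surjectivity of the rank-zero extension map
    intro x hx g
    obtain ⟨aa, hfin, hsupp, hsum⟩ := C.e_surj x g
    have hne : ∀ {y : P}, y ≤ x → r y = 0 → y < x := fun {y} h h0 =>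
      lt_of_le_of_ne h (by rintro rfl; omega)
    refine ⟨fun y => if h : y ≤ x ∧ r y = 0 then C.e y y le_rfl h.2 (aa y) else 0, ?_, ?_, ?_⟩
    · apply hfin.subset
      intro y hy
      simp only [Set.mem_setOf_eq] at hy ⊢
      intro h0
      apply hy
      by_cases h : y ≤ x ∧ r y = 0
      · rw [dif_pos h, h0, map_zero]
      · rw [dif_neg h]
    · intro y hy
      by_cases h : y ≤ x ∧ r y = 0
      · exact ⟨hne h.1 h.2, h.2⟩
      · exact absurd (dif_neg h) hy
    · rw [← hsum]
      apply finsum_congr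
      intro y
      beta_reduce
      by_cases h : y ≤ x ∧ r y = 0
      · have hlt : y < x := hne h.1 h.2
        rw [dif_pos hlt, dif_pos h, dif_pos h]
        exact C.e_natural y x y le_rfl hlt.le h.2 (aa y)
      · rw [dif_neg h]
        by_cases h' : y < x
        · rw [dif_pos h', dif_neg h, map_zero]
        · rw [dif_neg h', dif_neg h]
  · -- Part (2)
    intro x hx1
    refine ⟨?_, ?_, ?_⟩
    · -- (2a) injectivity of δ on Λ_x
      intro a a' hA
      have h0 : ∀ y, C.δ x y (a - a') = 0 := fun y => by rw [map_sub, hA y, sub_self]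
      have := C.delta_inj hr (by omega) h0
      exact sub_eq_zero.mp this
    · -- (2b) the image of δ lands in the kernel
      intro a
      have hAsupp : ∀ y, C.δ x y a ≠ 0 → y ≤ x ∧ r y = 0 := by
        intro y hy
        have hcov : y ⋖ x := by
          by_contra h
          rw [C.delta_support x y h] at hy
          exact hy rfl
        have := hr.2.1 y x hcov
        exact ⟨hcov.le, by omega⟩
      have hkerApp : (∑ᶠ y : P, if h : y ≤ x ∧ r y = 0 then
          C.e x y h.1 h.2 (C.δ x y a) else 0) = 0 := by
        refine (C.e_ker x (fun y => C.δ x y a) (C.delta_fin x a) hAsupp).mpr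
          ⟨Function.update (fun y => (0 : C.Λ y)) x a, ?_, ?_, ?_⟩
        · exact (Set.finite_singleton x).subset (fun y hy => by
            by_contra hyx
            exact hy (Function.update_of_ne hyx a _))
        · intro y hy
          have hyx : y = x := by
            by_contra hyx; exact hy (Function.update_of_ne hyx a _)
          subst hyx; exact ⟨le_rfl, hx1⟩
        · intro y
          rw [finsum_eq_single _ x (fun w hw => by
            rw [Function.update_of_ne hw a _, map_zero]), Function.update_self]
      refine Eq.trans ?_ hkerApp
      apply finsum_congr
      intro y
      by_cases h1 : y < x ∧ r y = 0
      · rw [dif_pos h1, dif_pos (⟨h1.1.le, h1.2⟩ : y ≤ x ∧ r y = 0)]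
        exact C.e_natural y x y le_rfl h1.1.le h1.2 (C.δ x y a)
      · rw [dif_neg h1]
        by_cases h2 : y ≤ x ∧ r y = 0
        · exfalso
          rcases lt_or_eq_of_le h2.1 with hlt | heq
          · exact h1 ⟨hlt, h2.2⟩
          · have := h2.2
            rw [heq] at this
            omega
        · rw [dif_neg h2]
    · -- (2c) δ reaches every family in the kernel
      intro g hgfin hglt hgsum
      have hr0 : ∀ y, g y ≠ 0 → y < x ∧ r y = 0 := by
        intro y hy
        have hlt := hglt y hy
        have := hr.2.2 _ _ hlt
        exact ⟨hlt, by omega⟩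
      have lift : ∀ y, ∃ cc : C.Λ y, (g y = 0 → cc = 0) ∧
          ∀ h0 : r y = 0, C.e y y le_rfl h0 cc = g y := by
        intro y
        by_cases hgy : g y = 0
        · exact ⟨0, fun _ => rfl, fun h0 => by rw [map_zero, hgy]⟩
        · obtain ⟨hyx, hy0⟩ := hr0 y hgy
          obtain ⟨cc, hcc⟩ := C.e0_surj hr hy0 (g y)
          exact ⟨cc, fun h => absurd h hgy, fun h0 => hcc⟩
      choose A hA0 hAe using lift
      have hAfin : {y : P | A y ≠ 0}.Finite := hgfin.subset (fun y hy => by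
        simp only [Set.mem_setOf_eq] at hy ⊢
        intro h; exact hy (hA0 y h))
      have hAsupp : ∀ y, A y ≠ 0 → y ≤ x ∧ r y = 0 := by
        intro y hy
        have hgy : g y ≠ 0 := fun h => hy (hA0 y h)
        obtain ⟨hyx, hy0⟩ := hr0 y hgy
        exact ⟨hyx.le, hy0⟩
      have hEsum : (∑ᶠ y : P, if h : y ≤ x ∧ r y = 0 then
          C.e x y h.1 h.2 (A y) else 0) = 0 := by
        refine Eq.trans ?_ hgsum
        apply finsum_congr
        intro y
        by_cases hgy : g y = 0
        · rw [hA0 y hgy]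
          by_cases h : y ≤ x ∧ r y = 0
          · rw [dif_pos h]
            by_cases h' : y < x
            · rw [dif_pos h', map_zero, hgy, map_zero]
            · rw [dif_neg h', map_zero]
          · rw [dif_neg h]
            by_cases h' : y < x
            · rw [dif_pos h', hgy, map_zero]
            · rw [dif_neg h']
        · obtain ⟨hyx, hy0⟩ := hr0 y hgy
          rw [dif_pos (⟨hyx.le, hy0⟩ : y ≤ x ∧ r y = 0), dif_pos hyx, ← hAe y hy0]
          exact (C.e_natural y x y le_rfl hyx.le hy0 (A y)).symm
      obtain ⟨b, hbfin, hbsupp, hb⟩ := (C.e_ker x A hAfin hAsupp).mp hEsum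
      have hbx : ∀ y, A y = C.δ x y (b x) := by
        intro y
        rw [hb y]
        apply finsum_eq_single
        intro w hw
        have hbw : b w = 0 := by
          by_contra hbw
          obtain ⟨hwx, hrw⟩ := hbsupp w hbw
          have hlt := lt_of_le_of_ne hwx hw
          have := hr.2.2 _ _ hlt
          omega
        rw [hbw, map_zero]
      exact ⟨b x, fun y hyx h0 => by rw [← hbx y]; exact hAe y h0⟩
  · -- Part (3): freeness
    intro hfree x
    suffices h : ∀ n, ∀ x : P, r x = n → Module.Free ℤ (C.Λ x) from h (r x) x rfl
    intro n
    induction n using Nat.strong_induction_on with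
    | _ n IH =>
      intro x hxn
      rcases Nat.eq_zero_or_pos n with h0 | hpos
      · -- rank zero
        subst h0
        have hbij : Function.Bijective (C.e x x le_rfl hxn) := by
          constructor
          · intro c c' hcc
            have : C.e x x le_rfl hxn (c - c') = 0 := by rw [map_sub, hcc, sub_self]
            exact sub_eq_zero.mp (C.e0_inj hr hxn this)
          · intro g
            obtain ⟨c, hc⟩ := C.e0_surj hr hxn g
            exact ⟨c, hc⟩
        exact free_int_transfer _ _
          (Module.Free.of_equiv
            (AddEquiv.toIntLinearEquiv (AddEquiv.ofBijective _ hbij)).symm)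
      · -- positive rank
        haveI hTfree : ∀ y : {y : P // y ⋖ x}, Module.Free ℤ (C.Λ y.1) := by
          intro y
          have hcov := y.2
          have hry : r x = r y.1 + 1 := hr.2.1 y.1 x hcov
          exact IH (r y.1) (by omega) y.1 rfl
        let Fraw : C.Λ x → Π₀ y : {y : P // y ⋖ x}, C.Λ y.1 := fun a =>
          DFinsupp.mk ((C.delta_fin x a).toFinset.subtype (fun y => y ⋖ x))
            (fun y => C.δ x y.1.1 a)
        have hpt : ∀ (a : C.Λ x) (y : {y : P // y ⋖ x}), Fraw a y = C.δ x y.1 a := by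
          intro a y
          simp only [Fraw]
          rw [DFinsupp.mk_apply]
          by_cases h : y ∈ (C.delta_fin x a).toFinset.subtype (fun y => y ⋖ x)
          · rw [dif_pos h]
          · rw [dif_neg h]
            have hz : C.δ x y.1 a = 0 := by
              by_contra hne
              exact h (Finset.mem_subtype.mpr ((C.delta_fin x a).mem_toFinset.mpr hne))
            exact hz.symm
        let F : C.Λ x →+ Π₀ y : {y : P // y ⋖ x}, C.Λ y.1 :=
          AddMonoidHom.mk' Fraw (by
            intro a b
            ext y
            rw [DFinsupp.add_apply, hpt, hpt, hpt, map_add])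
        have hFpt : ∀ (a : C.Λ x) (y : {y : P // y ⋖ x}), F a y = C.δ x y.1 a :=
          fun a y => hpt a y
        have hFinj : Function.Injective F := by
          intro a b hab
          have hd : ∀ y, C.δ x y (a - b) = 0 := by
            intro y
            by_cases hy : y ⋖ x
            · have h1 : F a ⟨y, hy⟩ = F b ⟨y, hy⟩ := by rw [hab]
              rw [hFpt, hFpt] at h1
              rw [map_sub, h1, sub_self]
            · rw [C.delta_support x y hy]
              rfl
          exact sub_eq_zero.mp (C.delta_inj hr (by omega) hd)
        haveI := int_submodule_free (LinearMap.range F.toIntLinearMap)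
        exact free_int_transfer _ _
          (Module.Free.of_equiv (LinearEquiv.ofInjective F.toIntLinearMap hFinj).symm)
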